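/- Let p>0, p≠1, and let δ, T, D_p be as in the context, with a sequence of polynomials (φ_n) satisfying the stated conditions. Then for every integer n≥2, D_p φ_n = (D_p φ_n)(0) + [n]_p·φ_{n−1} (equality of polynomials, where (D_p φ_n)(0) denotes the constant term of D_p φ_n). -/

import Mathlib

open Polynomial

noncomputable section

/-- the p-number `[n]_p = (1-p^n)/(1-p)` -/
def pnum (p : ℝ) (n : ℕ) : ℂ := (1 - (p : ℂ) ^ n) / (1 - (p : ℂ))

/-- the p-factorial `[n]_p!` -/
def pfact (p : ℝ) (n : ℕ) : ℂ := ∏ j ∈ Finset.range n, pnum p (j + 1)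

/-- the p-binomial coefficient -/
def pbinom (p : ℝ) (n k : ℕ) : ℂ := pfact p n / (pfact p k * pfact p (n - k))

/-- `D` is the p-difference operator, the linear operator with `D X^n = [n]_p X^{n-1}` -/
def IsDp (p : ℝ) (D : Module.End ℂ (Polynomial ℂ)) : Prop :=
  ∀ n : ℕ, D (X ^ n) = Polynomial.C (pnum p n) * X ^ (n - 1)

/-- `T` is the linear operator with `T X^n = Σ_{k≤n} C_p(n,k) δ_k X^{n-k}` -/
def IsTp (p : ℝ) (δ : ℕ → ℂ) (T : Module.End ℂ (Polynomial ℂ)) : Prop :=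
  ∀ n : ℕ, T (X ^ n) =
    ∑ k ∈ Finset.range (n + 1), Polynomial.C (pbinom p n k * δ k) * X ^ (n - k)

/-- `φ` is a sequence of polynomials with `deg φ_n = n`, `φ_0 = 1`, `φ_n(0) = 0` and
`Tφ_n − φ_n = [n]_p X^{n-1}` for `n ≥ 1` -/
def IsPhi (p : ℝ) (T : Module.End ℂ (Polynomial ℂ)) (φ : ℕ → Polynomial ℂ) : Prop :=
  φ 0 = 1 ∧
  (∀ n : ℕ, 1 ≤ n → (φ n).natDegree = n ∧ (φ n).eval 0 = 0) ∧
  ∀ n : ℕ, 1 ≤ n → T (φ n) - φ n = Polynomial.C (pnum p n) * X ^ (n - 1)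

lemma cp_ne_one {p : ℝ} (hp0 : 0 < p) (hp1 : p ≠ 1) : (p : ℂ) ≠ 1 := by
  exact_mod_cast hp1

lemma pnum_ne_zero {p : ℝ} (hp0 : 0 < p) (hp1 : p ≠ 1) {n : ℕ} (hn : 1 ≤ n) :
    pnum p n ≠ 0 := by
  have h1 : (p : ℂ) ^ n ≠ 1 := by
    have : p ^ n ≠ 1 := by
      intro h
      rcases (pow_eq_one_iff_cases.mp h) with h | h | h
      · omega
      · exact hp1 h
      · linarith [h.1]
    exact_mod_cast this
  have h2 : (1 : ℂ) - p ≠ 0 := by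
    intro h
    apply hp1
    have : (p:ℂ) = 1 := by linear_combination -h
    exact_mod_cast this
  exact div_ne_zero (sub_ne_zero.mpr (Ne.symm h1)) h2

lemma pfact_ne_zero {p : ℝ} (hp0 : 0 < p) (hp1 : p ≠ 1) (n : ℕ) : pfact p n ≠ 0 := by
  apply Finset.prod_ne_zero_iff.mpr
  intro j _
  exact pnum_ne_zero hp0 hp1 (Nat.le_add_left 1 j)

lemma pfact_zero (p : ℝ) : pfact p 0 = 1 := by simp [pfact]

lemma pfact_succ (p : ℝ) (n : ℕ) : pfact p (n+1) = pfact p n * pnum p (n+1) := by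
  simp [pfact, Finset.prod_range_succ]

lemma pbinom_zero_right {p : ℝ} (hp0 : 0 < p) (hp1 : p ≠ 1) (n : ℕ) : pbinom p n 0 = 1 := by
  simp [pbinom, pfact_zero, div_self (pfact_ne_zero hp0 hp1 n)]

lemma pbinom_self {p : ℝ} (hp0 : 0 < p) (hp1 : p ≠ 1) (n : ℕ) : pbinom p n n = 1 := by
  simp [pbinom, pfact_zero, div_self (pfact_ne_zero hp0 hp1 n)]

lemma pbinom_key {p : ℝ} (hp0 : 0 < p) (hp1 : p ≠ 1) {m k : ℕ} (hk : k ≤ m) :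
    pnum p (m + 1 - k) * pbinom p (m+1) k = pnum p (m+1) * pbinom p m k := by
  have h1 : m + 1 - k = (m - k) + 1 := by omega
  rw [h1, pbinom, pbinom, pfact_succ, h1, pfact_succ]
  have := pfact_ne_zero hp0 hp1 m
  have := pfact_ne_zero hp0 hp1 k
  have := pfact_ne_zero hp0 hp1 (m - k)
  have := pnum_ne_zero hp0 hp1 (Nat.le_add_left 1 (m-k))
  field_simp

lemma coeff_T_pow {p : ℝ} {δ : ℕ → ℂ} {T : Module.End ℂ (Polynomial ℂ)}
    (hT : IsTp p δ T) (j i : ℕ) :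
    (T (X ^ j)).coeff i = if i ≤ j then pbinom p j (j - i) * δ (j - i) else 0 := by
  rw [hT j, finset_sum_coeff]
  simp only [coeff_C_mul, coeff_X_pow, mul_ite, mul_one, mul_zero]
  by_cases h : i ≤ j
  · rw [if_pos h]
    rw [Finset.sum_eq_single (j - i)]
    · rw [if_pos (by omega)]
    · intro k hk hne
      rw [if_neg (by simp at hk; omega)]
    · intro h'
      simp at h'
  · rw [if_neg h]
    apply Finset.sum_eq_zero
    intro k hk
    rw [if_neg (by simp at hk; omega)]

lemma T_apply {p : ℝ} {δ : ℕ → ℂ} {T : Module.End ℂ (Polynomial ℂ)}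
    (hT : IsTp p δ T) (h : Polynomial ℂ) {N : ℕ} (hN : h.natDegree ≤ N) :
    T h = ∑ j ∈ Finset.range (N + 1), h.coeff j • T (X ^ j) := by
  conv_lhs => rw [h.as_sum_range' (N+1) (Nat.lt_succ_of_le hN)]
  rw [map_sum]
  congr 1
  ext j
  rw [← smul_X_eq_monomial, map_smul]

lemma coeff_T_top {p : ℝ} (hp0 : 0 < p) (hp1 : p ≠ 1) {δ : ℕ → ℂ} (hδ0 : δ 0 = 1)
    {T : Module.End ℂ (Polynomial ℂ)} (hT : IsTp p δ T)
    (h : Polynomial ℂ) {m : ℕ} (hm : h.natDegree ≤ m) :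
    (T h).coeff m = h.coeff m := by
  rw [T_apply hT h hm, finset_sum_coeff]
  simp only [coeff_smul, coeff_T_pow hT, smul_eq_mul]
  rw [Finset.sum_eq_single m]
  · simp [pbinom_zero_right hp0 hp1, hδ0]
  · intro j hj hne
    simp only [Finset.mem_range] at hj
    rcases lt_or_ge j m with h' | h'
    · rw [if_neg (by omega), mul_zero]
    · have : j = m := by omega
      exact absurd this hne
  · intro h'
    simp at h'

lemma coeff_T_sub_one {p : ℝ} (hp0 : 0 < p) (hp1 : p ≠ 1) {δ : ℕ → ℂ} (hδ0 : δ 0 = 1)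
    {T : Module.End ℂ (Polynomial ℂ)} (hT : IsTp p δ T)
    (h : Polynomial ℂ) {m : ℕ} (hm : h.natDegree ≤ m + 1) :
    (T h).coeff m = h.coeff m + pbinom p (m+1) 1 * δ 1 * h.coeff (m+1) := by
  rw [T_apply hT h hm, finset_sum_coeff]
  simp only [coeff_smul, coeff_T_pow hT, smul_eq_mul]
  rw [Finset.sum_range_succ, Finset.sum_range_succ]
  have : ∀ j ∈ Finset.range m, h.coeff j * (if m ≤ j then pbinom p j (j - m) * δ (j - m) else 0) = 0 := by
    intro j hj
    simp only [Finset.mem_range] at hj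
    rw [if_neg (by omega), mul_zero]
  rw [Finset.sum_eq_zero this]
  simp only [if_pos (le_refl m), if_pos (Nat.le_succ m), Nat.sub_self]
  have h1 : m + 1 - m = 1 := by omega
  rw [h1, pbinom_zero_right hp0 hp1, hδ0]
  ring

lemma pnum_zero (p : ℝ) : pnum p 0 = 0 := by simp [pnum]

lemma pnum_one {p : ℝ} (hp1 : p ≠ 1) : pnum p 1 = 1 := by
  have h2 : (1 : ℂ) - p ≠ 0 := by
    intro h
    apply hp1
    have : (p:ℂ) = 1 := by linear_combination -h
    exact_mod_cast this
  simp [pnum, div_self h2]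

lemma pbinom_ne_zero {p : ℝ} (hp0 : 0 < p) (hp1 : p ≠ 1) (n k : ℕ) : pbinom p n k ≠ 0 :=
  div_ne_zero (pfact_ne_zero hp0 hp1 n)
    (mul_ne_zero (pfact_ne_zero hp0 hp1 k) (pfact_ne_zero hp0 hp1 (n - k)))

lemma DT_comm {p : ℝ} (hp0 : 0 < p) (hp1 : p ≠ 1) {δ : ℕ → ℂ} (hδ0 : δ 0 = 1)
    {D T : Module.End ℂ (Polynomial ℂ)} (hD : IsDp p D) (hT : IsTp p δ T)
    (f : Polynomial ℂ) : D (T f) = T (D f) := by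
  induction f using Polynomial.induction_on' with
  | add u v hu hv => rw [map_add, map_add, hu, hv, map_add, map_add]
  | monomial n a =>
    rw [← smul_X_eq_monomial, map_smul, map_smul, map_smul, map_smul]
    congr 1
    cases n with
    | zero =>
      have hD0 : D ((X : Polynomial ℂ) ^ 0) = 0 := by
        rw [hD 0, pnum_zero]; simp
      have hT0 : T ((X : Polynomial ℂ) ^ 0) = 1 := by
        rw [hT 0]
        simp [pbinom_zero_right hp0 hp1, hδ0]
      rw [hT0, hD0, map_zero, ← hT0, ← hD0, hT0]
      rw [show (1 : Polynomial ℂ) = X ^ 0 by simp, hD0]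
    | succ m =>
      rw [hT (m+1), map_sum, hD (m+1)]
      have hm1 : m + 1 - 1 = m := rfl
      rw [hm1, ← Polynomial.smul_eq_C_mul, map_smul, hT m, Finset.smul_sum]
      rw [Finset.sum_range_succ]
      have hlast : D (Polynomial.C (pbinom p (m+1) (m+1) * δ (m+1)) * X ^ (m + 1 - (m+1))) = 0 := by
        rw [← Polynomial.smul_eq_C_mul, map_smul, Nat.sub_self, hD 0, pnum_zero]
        simp
      rw [hlast, add_zero]
      apply Finset.sum_congr rfl
      intro k hk
      simp only [Finset.mem_range] at hk
      have hk' : k ≤ m := by omega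
      rw [← Polynomial.smul_eq_C_mul, map_smul, hD (m+1-k)]
      have h2 : m + 1 - k - 1 = m - k := by omega
      rw [h2, Polynomial.smul_eq_C_mul, Polynomial.smul_eq_C_mul, ← mul_assoc, ← Polynomial.C_mul,
        ← mul_assoc, ← Polynomial.C_mul]
      congr 2
      have := pbinom_key hp0 hp1 hk'
      linear_combination δ k * this

lemma T_fixed_eq_zero {p : ℝ} (hp0 : 0 < p) (hp1 : p ≠ 1) {δ : ℕ → ℂ} (hδ0 : δ 0 = 1)
    (hδ1 : δ 1 ≠ 0) {T : Module.End ℂ (Polynomial ℂ)} (hT : IsTp p δ T)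
    {g : Polynomial ℂ} (hg : T g = g) (h0 : g.coeff 0 = 0) : g = 0 := by
  by_contra hne
  rcases Nat.eq_zero_or_pos g.natDegree with hd | hd
  · apply hne
    rw [Polynomial.eq_C_of_natDegree_eq_zero hd, h0, map_zero]
  · set d := g.natDegree with hdef
    have hco := coeff_T_sub_one hp0 hp1 hδ0 hT g (m := d - 1) (by omega)
    rw [hg] at hco
    have hd1 : d - 1 + 1 = d := by omega
    rw [hd1] at hco
    have hz : pbinom p d 1 * δ 1 * g.coeff d = 0 := by linear_combination -hco
    have hlead : g.coeff d ≠ 0 := Polynomial.leadingCoeff_ne_zero.mpr hne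
    exact (mul_ne_zero (mul_ne_zero (pbinom_ne_zero hp0 hp1 d 1) hδ1) hlead) hz

lemma T_const {p : ℝ} (hp0 : 0 < p) (hp1 : p ≠ 1) {δ : ℕ → ℂ} (hδ0 : δ 0 = 1)
    {T : Module.End ℂ (Polynomial ℂ)} (hT : IsTp p δ T) (c : ℂ) :
    T (Polynomial.C c) = Polynomial.C c := by
  have : (Polynomial.C c : Polynomial ℂ) = c • (X ^ 0) := by
    simp [Polynomial.smul_eq_C_mul]
  rw [this, map_smul, hT 0]
  simp [pbinom_zero_right hp0 hp1, hδ0, Polynomial.smul_eq_C_mul]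

/-- For `n ≥ 2`, `D_p φ_n = (D_p φ_n)(0) + [n]_p φ_{n-1}`. -/
theorem Dp_phi_recurrence (p : ℝ) (hp0 : 0 < p) (hp1 : p ≠ 1)
    (δ : ℕ → ℂ) (hδ0 : δ 0 = 1)
    (D : Module.End ℂ (Polynomial ℂ)) (hD : IsDp p D)
    (T : Module.End ℂ (Polynomial ℂ)) (hT : IsTp p δ T)
    (φ : ℕ → Polynomial ℂ) (hφ : IsPhi p T φ) :
    ∀ n : ℕ, 2 ≤ n →
      D (φ n) = Polynomial.C ((D (φ n)).coeff 0) + Polynomial.C (pnum p n) * φ (n - 1) := by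
  obtain ⟨hφ0, hdeg, hrec⟩ := hφ
  have hδ1 : δ 1 ≠ 0 := by
    have h1 := hrec 1 le_rfl
    have hdeg1 := (hdeg 1 le_rfl).1
    have hco := congrArg (fun q => Polynomial.coeff q 0) h1
    simp only [Polynomial.coeff_sub] at hco
    rw [coeff_T_sub_one hp0 hp1 hδ0 hT (φ 1) (m := 0) (by omega)] at hco
    simp [pnum_one hp1] at hco
    intro h
    rw [h] at hco
    simp at hco
  intro n hn
  set c := (D (φ n)).coeff 0 with hc
  set g := D (φ n) - Polynomial.C c - Polynomial.C (pnum p n) * φ (n-1) with hgdef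
  have hsub : n - 1 - 1 = n - 2 := by omega
  have hTg : T g = g := by
    have h1 := hrec n (by omega)
    have h2 := hrec (n-1) (by omega)
    have hDT := DT_comm hp0 hp1 hδ0 hD hT (φ n)
    have e1 : T (D (φ n)) = D (φ n) + Polynomial.C (pnum p n * pnum p (n-1)) * X ^ (n-2) := by
      rw [← hDT]
      have hTφ : T (φ n) = φ n + Polynomial.C (pnum p n) * X ^ (n-1) := by
        linear_combination h1
      rw [hTφ, map_add, ← Polynomial.smul_eq_C_mul, map_smul, hD (n-1), hsub]
      rw [Polynomial.smul_eq_C_mul, ← mul_assoc, ← Polynomial.C_mul]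
    have e2 : T (φ (n-1)) = φ (n-1) + Polynomial.C (pnum p (n-1)) * X ^ (n-2) := by
      rw [← hsub]
      linear_combination h2
    rw [hgdef, map_sub, map_sub, e1, T_const hp0 hp1 hδ0 hT,
      show Polynomial.C (pnum p n) * φ (n-1) = pnum p n • φ (n-1) from (Polynomial.smul_eq_C_mul _).symm, map_smul, e2]
    simp only [Polynomial.smul_eq_C_mul, Polynomial.C_mul]
    ring
  have hg0 : g.coeff 0 = 0 := by
    have hev : (φ (n-1)).coeff 0 = 0 := by
      rw [Polynomial.coeff_zero_eq_eval_zero]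
      exact (hdeg (n-1) (by omega)).2
    rw [hgdef]
    simp [Polynomial.coeff_sub, Polynomial.coeff_C_mul, hev, ← hc]
  have hgz := T_fixed_eq_zero hp0 hp1 hδ0 hδ1 hT hTg hg0
  rw [hgdef] at hgz
  linear_combination hgz


end
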